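/- Consider the FGM construction with strictly positive marginals: I : Ω → {0,1}^d a random vector, X^[1]_k with cdf 1−(1−F_k)^2 and X^[2]_k with cdf F_k^2 for cdfs F_k of strictly positive rvs, all 2d+1 random elements mutually independent, and X_k = (1−I_k)X^[1]_k + I_k X^[2]_k, S = X_1 + ... + X_d. Fix m ∈ ℕ≥1 and assume E[(X^[j]_k)^m] < ∞ for all k, j. Writing E[X_k^j] for the j-th moment of the marginal distribution F_k (with E[X_k^0] = 1) and μ^{(j)}_{k,[2]} = E[(X^[2]_k)^j], one has E[S^m] = Σ_{(j_1,...,j_d)∈ℕ^d : j_1+···+j_d = m} (m!/(j_1!···j_d!)) · (∏_{k=1}^d E[X_k^{j_k}]) · Σ_{i∈{0,1}^d} P(I=i) ∏_{k=1}^d [1 + (−1)^{i_k}(1 − μ^{(j_k)}_{k,[2]}/E[X_k^{j_k}])]. -/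

import Mathlib

open MeasureTheory ProbabilityTheory

lemma iIndepFun_precomp {Ω ι ι' : Type*} [MeasurableSpace Ω] {μ : Measure Ω}
    {β : ι → Type*} [m : ∀ i, MeasurableSpace (β i)] {f : ∀ i, Ω → β i}
    (h : iIndepFun f μ) (u : ι' ↪ ι) :
    iIndepFun (fun i => f (u i)) μ := by
  classical
  rw [iIndepFun_iff_measure_inter_preimage_eq_mul] at h ⊢
  intro S sets hsets
  set sets' : ∀ i : ι, Set (β i) :=
    fun i => ⋂ (i' : ι') (h' : u i' = i) (_ : i' ∈ S), h' ▸ sets i' with hsets'def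
  have key : ∀ i' ∈ S, sets' (u i') = sets i' := by
    intro i' hi'
    apply subset_antisymm
    · intro x hx
      exact Set.mem_iInter.1 (Set.mem_iInter.1 (Set.mem_iInter.1 hx i') rfl) hi'
    · intro x hx
      refine Set.mem_iInter.2 fun i'' => Set.mem_iInter.2 fun h'' =>
        Set.mem_iInter.2 fun hi'' => ?_
      obtain rfl := u.injective h''
      exact hx
  have hmap : ∀ i ∈ S.map u, MeasurableSet[m i] (sets' i) := by
    intro i hi
    obtain ⟨i', hi', rfl⟩ := Finset.mem_map.1 hi
    rw [key i' hi']; exact hsets i' hi'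
  have hmain := h (S.map u) hmap
  have hInter : (⋂ i ∈ S.map u, f i ⁻¹' sets' i) = ⋂ i' ∈ S, f (u i') ⁻¹' sets i' := by
    ext x; simp only [Set.mem_iInter, Finset.mem_map]
    constructor
    · intro hx i' hi'
      have := hx (u i') ⟨i', hi', rfl⟩
      rwa [key i' hi'] at this
    · rintro hx i ⟨i', hi', rfl⟩
      rw [key i' hi']; exact hx i' hi'
  rw [hInter, Finset.prod_map] at hmain
  rw [hmain]
  exact Finset.prod_congr rfl fun i' hi' => by rw [key i' hi']

lemma integral_prod_of_iIndepFun {Ω ι : Type*} [MeasurableSpace Ω] {μ : Measure Ω}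
    [IsProbabilityMeasure μ]
    (g : ι → Ω → ℝ) (hmeas : ∀ i, Measurable (g i))
    (hindep : iIndepFun g μ)
    (hint : ∀ i, Integrable (g i) μ) (s : Finset ι) :
    Integrable (fun ω => ∏ i ∈ s, g i ω) μ ∧
      ∫ ω, ∏ i ∈ s, g i ω ∂μ = ∏ i ∈ s, ∫ ω, g i ω ∂μ := by
  classical
  induction s using Finset.cons_induction with
  | empty => simp
  | cons a s ha ih =>
    have hIndep2 : IndepFun (g a) (fun ω => ∏ i ∈ s, g i ω) μ := by
      have h1 := hindep.indepFun_finset_prod_of_notMem hmeas ha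
      have heq : (∏ j ∈ s, g j) = fun ω => ∏ i ∈ s, g i ω := by
        ext ω; simp [Finset.prod_apply]
      rw [heq] at h1; exact h1.symm
    have hInt : Integrable (fun ω => g a ω * ∏ i ∈ s, g i ω) μ :=
      hIndep2.integrable_mul (hint a) ih.1
    have hmul := hIndep2.integral_mul_eq_mul_integral (hint a).aestronglyMeasurable ih.1.aestronglyMeasurable
    constructor
    · simp only [Finset.prod_cons]; exact hInt
    · simp only [Finset.prod_cons]
      have : (fun ω => g a ω * ∏ i ∈ s, g i ω)
          = (g a * fun ω => ∏ i ∈ s, g i ω) := rfl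
      calc ∫ ω, g a ω * ∏ i ∈ s, g i ω ∂μ
          = ∫ ω, (g a * fun ω' => ∏ i ∈ s, g i ω') ω ∂μ := rfl
        _ = (∫ ω, g a ω ∂μ) * ∫ ω, ∏ i ∈ s, g i ω ∂μ := hmul
        _ = (∫ ω, g a ω ∂μ) * ∏ i ∈ s, ∫ ω, g i ω ∂μ := by rw [ih.2]

/-- Codomains of the `2d+1` random elements in the FGM construction. -/
def fgmType (d : ℕ) : Option (Fin d × Fin 2) → Type
  | none => Fin d → Fin 2
  | some _ => ℝ

instance fgmTypeMeasurableSpace (d : ℕ) (o : Option (Fin d × Fin 2)) :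
    MeasurableSpace (fgmType d o) := by
  cases o with
  | none => exact (inferInstance : MeasurableSpace (Fin d → Fin 2))
  | some p => exact (inferInstance : MeasurableSpace ℝ)

/-- The family consisting of the Bernoulli random vector `I` together with the `2d`
order-statistic components `X j k` (`j = 0`: minimum, `j = 1`: maximum). -/
def fgmFamily {Ω : Type*} (d : ℕ) (I : Ω → Fin d → Fin 2)
    (X : Fin 2 → Fin d → Ω → ℝ) : (o : Option (Fin d × Fin 2)) → Ω → fgmType d o
  | none => I
  | some p => X p.2 p.1

/-- Theorem 3.2, formula (3.4): the `m`-th moment of the aggregate rv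
`S = X_1 + ⋯ + X_d` of the FGM construction with strictly positive marginals, in terms of
the marginal moments `EX k j` (the `j`-th moment of the marginal distribution `F_k`,
which equals the average of the `j`-th moments of the two order statistics) and the
moments `μ^{(j)}_{k,[2]}` of the maxima. -/
theorem fgm_aggregate_moments {Ω : Type*} [MeasurableSpace Ω]
    (P : Measure Ω) [IsProbabilityMeasure P] (d : ℕ) (F : Fin d → ℝ → ℝ)
    (I : Ω → Fin d → Fin 2) (X : Fin 2 → Fin d → Ω → ℝ)
    (hI : Measurable I) (hX : ∀ j k, Measurable (X j k))
    (hpos : ∀ j k ω, 0 < X j k ω)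
    (hIndep : iIndepFun (fgmFamily d I X) P)
    (hcdf_min : ∀ k x, (P {ω | X 0 k ω ≤ x}).toReal = 1 - (1 - F k x) ^ 2)
    (hcdf_max : ∀ k x, (P {ω | X 1 k ω ≤ x}).toReal = (F k x) ^ 2)
    (m : ℕ) (hm : 1 ≤ m)
    (hint : ∀ j k, Integrable (fun ω => X j k ω ^ m) P)
    (EX : Fin d → ℕ → ℝ)
    (hEX : ∀ k j, EX k j
      = ((∫ ω, X 0 k ω ^ j ∂P) + ∫ ω, X 1 k ω ^ j ∂P) / 2) :
    ∫ ω, (∑ k, ((1 - ((I ω k : ℕ) : ℝ)) * X 0 k ω + ((I ω k : ℕ) : ℝ) * X 1 k ω)) ^ m ∂P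
      = ∑ j ∈ Finset.Nat.antidiagonalTuple d m,
          ((m.factorial : ℝ) / ∏ k, ((j k).factorial : ℝ))
            * (∏ k, EX k (j k))
            * ∑ i : Fin d → Fin 2, (P {ω | I ω = i}).toReal *
                ∏ k, (1 + (-1 : ℝ) ^ ((i k : ℕ))
                  * (1 - (∫ ω, X 1 k ω ^ (j k) ∂P) / EX k (j k))) := by
  classical
  set A := Finset.Nat.antidiagonalTuple d m with hAdef
  have hjle : ∀ j ∈ A, ∀ k : Fin d, j k ≤ m := by
    intro j hj k
    have hsum : ∑ k, j k = m := Finset.Nat.mem_antidiagonalTuple.1 hj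
    calc j k ≤ ∑ k, j k :=
          Finset.single_le_sum (fun _ _ => Nat.zero_le _) (Finset.mem_univ k)
      _ = m := hsum
  have hIntPow : ∀ (c : Fin 2) (k : Fin d) (j : ℕ), j ≤ m →
      Integrable (fun ω => X c k ω ^ j) P := by
    intro c k j hj
    refine Integrable.mono' ((integrable_const (1:ℝ)).add (hint c k))
      (((hX c k).pow_const j).aestronglyMeasurable)
      (Filter.Eventually.of_forall fun ω => ?_)
    have hx := hpos c k ω
    have hm0 : 0 ≤ X c k ω ^ m := pow_nonneg hx.le m
    rw [Real.norm_eq_abs, abs_of_nonneg (pow_nonneg hx.le j)]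
    simp only [Pi.add_apply]
    rcases le_or_gt (X c k ω) 1 with h1 | h1
    · have h2 : X c k ω ^ j ≤ 1 := pow_le_one₀ hx.le h1
      linarith
    · have h2 : X c k ω ^ j ≤ X c k ω ^ m := pow_le_pow_right₀ h1.le hj
      linarith
  have hPosInt : ∀ (c : Fin 2) (k : Fin d) (j : ℕ), j ≤ m →
      0 < ∫ ω, X c k ω ^ j ∂P := by
    intro c k j hj
    rw [integral_pos_iff_support_of_nonneg
      (fun ω => pow_nonneg (hpos c k ω).le j) (hIntPow c k j hj)]
    have hsupp : Function.support (fun ω => X c k ω ^ j) = Set.univ := by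
      ext ω
      simp only [Function.mem_support, Set.mem_univ, iff_true]
      exact (pow_pos (hpos c k ω) j).ne'
    rw [hsupp]
    simp
  have hEXpos : ∀ (k : Fin d) (j : ℕ), j ≤ m → 0 < EX k j := by
    intro k j hj
    rw [hEX]
    have h0 := hPosInt 0 k j hj
    have h1 := hPosInt 1 k j hj
    linarith
  have hMom : ∀ (c : Fin 2) (k : Fin d) (j : ℕ), j ≤ m →
      ∫ ω, X c k ω ^ j ∂P =
        EX k j * (1 + (-1:ℝ) ^ (c : ℕ) * (1 - (∫ ω, X 1 k ω ^ j ∂P) / EX k j)) := by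
    intro c k j hj
    have hE := hEX k j
    have hEne : EX k j ≠ 0 := (hEXpos k j hj).ne'
    set a := ∫ ω, X 0 k ω ^ j ∂P with ha
    set b := ∫ ω, X 1 k ω ^ j ∂P with hb
    fin_cases c
    · simp only [Fin.val_zero, pow_zero, one_mul]
      rw [mul_add, mul_one, mul_sub, mul_one, mul_div_cancel₀ _ hEne, hE]
      have : (∫ (ω : Ω), X (⟨0, by norm_num⟩ : Fin 2) k ω ^ j ∂P) = a := ha.symm
      rw [this]
      ring
    · simp only [Fin.val_one, pow_one]
      have h1 : (1 + (-1:ℝ) * (1 - b / EX k j)) = b / EX k j := by ring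
      rw [h1, mul_div_cancel₀ _ hEne]
      exact hb.symm
  have hIset : ∀ i : Fin d → Fin 2, MeasurableSet {ω | I ω = i} := by
    intro i
    have h : {ω | I ω = i} = I ⁻¹' {i} := by ext ω; simp
    rw [h]
    exact hI (measurableSet_singleton i)
  have hind_eq : ∀ i : Fin d → Fin 2,
      (fun ω => if I ω = i then (1:ℝ) else 0)
        = Set.indicator {ω | I ω = i} (fun _ => 1) := by
    intro i
    ext ω
    by_cases h : I ω = i <;> simp [Set.indicator_apply, Set.mem_setOf_eq, h]
  have hKey : ∀ (i : Fin d → Fin 2) (j : Fin d → ℕ), (∀ k, j k ≤ m) →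
      Integrable (fun ω => (if I ω = i then (1:ℝ) else 0) * ∏ k, X (i k) k ω ^ j k) P ∧
      ∫ ω, (if I ω = i then (1:ℝ) else 0) * ∏ k, X (i k) k ω ^ j k ∂P
        = (P {ω | I ω = i}).toReal * ∏ k, ∫ ω, X (i k) k ω ^ j k ∂P := by
    intro i j hj
    let u : Option (Fin d) ↪ Option (Fin d × Fin 2) :=
      Function.Embedding.optionMap ⟨fun k => (k, i k), fun k k' h => congrArg Prod.fst h⟩
    have h1 := iIndepFun_precomp hIndep u
    let φ : ∀ o : Option (Fin d), fgmType d (u o) → ℝ := fun o =>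
      match o with
      | none => fun v : Fin d → Fin 2 => if v = i then (1:ℝ) else 0
      | some k => fun x : ℝ => x ^ j k
    have hφ : ∀ o, Measurable (φ o) := by
      intro o
      match o with
      | none =>
        show Measurable (fun v : Fin d → Fin 2 => if v = i then (1:ℝ) else 0)
        exact Measurable.ite measurableSet_eq measurable_const measurable_const
      | some k =>
        show Measurable (fun x : ℝ => x ^ j k)
        exact measurable_id.pow_const (j k)
    have h2 := h1.comp φ hφ
    let G : Option (Fin d) → Ω → ℝ := fun o => φ o ∘ fgmFamily d I X (u o)
    have hGmeas : ∀ o, Measurable (G o) := by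
      intro o
      match o with
      | none => exact (hφ none).comp hI
      | some k => exact (hφ (some k)).comp (hX (i k) k)
    have hGint : ∀ o, Integrable (G o) P := by
      intro o
      match o with
      | none =>
        have he : G none = fun ω => if I ω = i then (1:ℝ) else 0 := rfl
        rw [he, hind_eq i]
        exact (integrable_const (1:ℝ)).indicator (hIset i)
      | some k => exact hIntPow (i k) k (j k) (hj k)
    obtain ⟨hint1, heq1⟩ := integral_prod_of_iIndepFun G hGmeas h2 hGint Finset.univ
    have hprod : ∀ ω, (∏ o : Option (Fin d), G o ω)
        = (if I ω = i then (1:ℝ) else 0) * ∏ k, X (i k) k ω ^ j k := by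
      intro ω
      rw [Fintype.prod_option]
      rfl
    have hfe : (fun ω => ∏ o : Option (Fin d), G o ω)
        = fun ω => (if I ω = i then (1:ℝ) else 0) * ∏ k, X (i k) k ω ^ j k :=
      funext hprod
    have hnone : ∫ ω, G none ω ∂P = (P {ω | I ω = i}).toReal := by
      have he : G none = fun ω => if I ω = i then (1:ℝ) else 0 := rfl
      rw [he, hind_eq i]
      exact integral_indicator_one (hIset i)
    constructor
    · exact hfe ▸ hint1
    · rw [← hfe, heq1, Fintype.prod_option, hnone]
      rfl
  have hA' : A = Finset.piAntidiag Finset.univ m := by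
    ext j
    simp [hAdef, Finset.Nat.mem_antidiagonalTuple, Finset.mem_piAntidiag]
  have hpt : ∀ ω, (∑ k, ((1 - ((I ω k : ℕ) : ℝ)) * X 0 k ω + ((I ω k : ℕ) : ℝ) * X 1 k ω)) ^ m
      = ∑ i : Fin d → Fin 2, ∑ j ∈ A, (Nat.multinomial Finset.univ j : ℝ) *
          ((if I ω = i then (1:ℝ) else 0) * ∏ k, X (i k) k ω ^ j k) := by
    intro ω
    have hk : ∀ k : Fin d,
        (1 - ((I ω k : ℕ) : ℝ)) * X 0 k ω + ((I ω k : ℕ) : ℝ) * X 1 k ω = X (I ω k) k ω := by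
      intro k
      have hlt := (I ω k).is_lt
      have hcase : I ω k = 0 ∨ I ω k = 1 := by
        have : (I ω k : ℕ) = 0 ∨ (I ω k : ℕ) = 1 := by omega
        rcases this with h | h
        · exact Or.inl (Fin.ext h)
        · exact Or.inr (Fin.ext h)
      rcases hcase with h | h <;> rw [h] <;> simp
    simp only [hk]
    have hswap : (∑ k, X (I ω k) k ω) ^ m
        = ∑ i : Fin d → Fin 2, (if I ω = i then (1:ℝ) else 0) * (∑ k, X (i k) k ω) ^ m := by
      simp [ite_mul, Finset.sum_ite_eq]
    rw [hswap]
    refine Finset.sum_congr rfl fun i _ => ?_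
    rw [hA', Finset.sum_pow_eq_sum_piAntidiag Finset.univ (fun k => X (i k) k ω) m,
      Finset.mul_sum]
    exact Finset.sum_congr rfl fun jj _ => by ring
  have hfun : (fun ω => (∑ k, ((1 - ((I ω k : ℕ) : ℝ)) * X 0 k ω
        + ((I ω k : ℕ) : ℝ) * X 1 k ω)) ^ m)
      = fun ω => ∑ i : Fin d → Fin 2, ∑ j ∈ A, (Nat.multinomial Finset.univ j : ℝ) *
          ((if I ω = i then (1:ℝ) else 0) * ∏ k, X (i k) k ω ^ j k) := funext hpt
  rw [hfun]
  rw [integral_finset_sum _ (fun i _ => integrable_finset_sum _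
    (fun j hj => ((hKey i j (hjle j hj)).1.const_mul _)))]
  have hstep : ∀ i : Fin d → Fin 2,
      ∫ ω, ∑ j ∈ A, (Nat.multinomial Finset.univ j : ℝ) *
          ((if I ω = i then (1:ℝ) else 0) * ∏ k, X (i k) k ω ^ j k) ∂P
        = ∑ j ∈ A, (Nat.multinomial Finset.univ j : ℝ) *
            ((P {ω | I ω = i}).toReal * ∏ k, ∫ ω, X (i k) k ω ^ j k ∂P) := by
    intro i
    rw [integral_finset_sum _ (fun j hj => ((hKey i j (hjle j hj)).1.const_mul _))]
    refine Finset.sum_congr rfl fun j hj => ?_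
    rw [integral_const_mul, (hKey i j (hjle j hj)).2]
  rw [Finset.sum_congr rfl fun i _ => hstep i, Finset.sum_comm]
  refine Finset.sum_congr rfl fun j hj => ?_
  have hmult : (Nat.multinomial Finset.univ j : ℝ)
      = (m.factorial : ℝ) / ∏ k, ((j k).factorial : ℝ) := by
    have hspec := Nat.multinomial_spec Finset.univ j
    have hsum : ∑ k, j k = m := Finset.Nat.mem_antidiagonalTuple.1 hj
    rw [hsum] at hspec
    have hne : (∏ k, ((j k).factorial : ℝ)) ≠ 0 := by positivity
    rw [eq_div_iff hne]
    have hcast := congrArg (Nat.cast (R := ℝ)) hspec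
    push_cast at hcast
    linarith
  rw [Finset.mul_sum]
  refine Finset.sum_congr rfl fun i _ => ?_
  have hprodmom : ∏ k, ∫ ω, X (i k) k ω ^ j k ∂P
      = (∏ k, EX k (j k)) * ∏ k, (1 + (-1:ℝ) ^ ((i k : ℕ))
          * (1 - (∫ ω, X 1 k ω ^ (j k) ∂P) / EX k (j k))) := by
    rw [← Finset.prod_mul_distrib]
    exact Finset.prod_congr rfl fun k _ => hMom (i k) k (j k) (hjle j hj k)
  rw [hmult, hprodmom]
  ring
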